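/- Macaulay's function is superadditive: for any nonnegative integers a and b and any positive integer d, a^{⟨d⟩} + b^{⟨d⟩} ≤ (a + b)^{⟨d⟩}. -/
import Mathlib


/-- Macaulay's function `a^{⟨d⟩}`: writing `a` in its Macaulay `d`-binomial representation
`a = C(k_d, d) + C(k_{d-1}, d-1) + ⋯ + C(k_j, j)` (computed greedily: `k_d` is the largest
integer with `C(k_d, d) ≤ a`), we set `a^{⟨d⟩} = C(k_d+1, d+1) + ⋯ + C(k_j+1, j+1)`,
and `0^{⟨d⟩} = 0`. -/
def macaulay : ℕ → ℕ → ℕ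
  | _, 0 => 0
  | 0, _ => 0
  | d + 1, a + 1 =>
    let k := Nat.findGreatest (fun k => Nat.choose k (d + 1) ≤ a + 1) (a + d + 2)
    Nat.choose (k + 1) (d + 2) + macaulay d (a + 1 - Nat.choose k (d + 1))

lemma macaulay_zero (d : ℕ) : macaulay d 0 = 0 := by cases d <;> rfl
lemma macaulay_zero_left (a : ℕ) : macaulay 0 a = 0 := by cases a <;> rfl

lemma choose_lower {j n : ℕ} (h1 : 1 ≤ j) (h2 : j ≤ n) : n + 1 ≤ Nat.choose n j + j := by
  obtain ⟨i, rfl⟩ : ∃ i, j = i + 1 := ⟨j - 1, by omega⟩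
  induction n with
  | zero => omega
  | succ n ih =>
    rcases Nat.lt_or_ge (i+1) (n+1) with h | h
    · have h' : i + 1 ≤ n := by omega
      have := ih h'
      have hpos : 0 < Nat.choose n i := Nat.choose_pos (by omega)
      rw [Nat.choose_succ_succ']
      omega
    · have hi : i + 1 = n + 1 := by omega
      rw [hi, Nat.choose_self]; omega

/-- Key unfolding: if `C(k,d+1) ≤ a < C(k+1,d+1)` (phrased additively) then one step of
the recursion uses exactly this `k`. -/
lemma macaulay_rep {d k r : ℕ} (hk : d + 1 ≤ k) (hr : r < Nat.choose k d) :
    macaulay (d+1) (Nat.choose k (d+1) + r) = Nat.choose (k+1) (d+2) + macaulay d r := by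
  have hCpos : 0 < Nat.choose k (d+1) := Nat.choose_pos hk
  obtain ⟨a, ha⟩ : ∃ a, Nat.choose k (d+1) + r = a + 1 := ⟨Nat.choose k (d+1) + r - 1, by omega⟩
  have hkle : k + 1 ≤ Nat.choose k (d+1) + (d+1) := choose_lower (by omega) hk
  have hfg : Nat.findGreatest (fun k => Nat.choose k (d + 1) ≤ a + 1) (a + d + 2) = k := by
    rw [Nat.findGreatest_eq_iff]
    refine ⟨by omega, fun _ => by omega, fun n hn _ hPn => ?_⟩
    have h1 : Nat.choose (k+1) (d+1) ≤ Nat.choose n (d+1) := Nat.choose_le_choose _ hn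
    have h2 : Nat.choose (k+1) (d+1) = Nat.choose k d + Nat.choose k (d+1) :=
      Nat.choose_succ_succ' k d
    omega
  rw [ha, macaulay]
  simp only [hfg]
  congr 1
  congr 1
  omega

/-- Greedy representation exists. -/
lemma macaulay_exists_rep {d a : ℕ} (ha : 0 < a) :
    ∃ k r, d + 1 ≤ k ∧ a = Nat.choose k (d+1) + r ∧ r < Nat.choose k d := by
  set P : ℕ → Prop := fun k => Nat.choose k (d+1) ≤ a with hP
  have hPd : P (d+1) := by simp only [P, Nat.choose_self]; omega
  set k := Nat.findGreatest P (a + d + 1) with hkdef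
  have hk1 : d + 1 ≤ k := Nat.le_findGreatest (by omega) hPd
  have hPk : Nat.choose k (d+1) ≤ a := Nat.findGreatest_spec (m := d+1) (by omega) hPd
  have hkne : k ≠ a + d + 1 := by
    intro h
    have := choose_lower (n := k) (j := d+1) (by omega) hk1
    rw [h] at this hPk
    omega
  have hkle : k ≤ a + d + 1 := Nat.findGreatest_le _
  have hnot : ¬ P (k+1) :=
    Nat.findGreatest_is_greatest (n := a + d + 1) (by omega) (by omega)
  simp only [P, not_le] at hnot
  refine ⟨k, a - Nat.choose k (d+1), hk1, by omega, ?_⟩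
  have h2 : Nat.choose (k+1) (d+1) = Nat.choose k d + Nat.choose k (d+1) :=
    Nat.choose_succ_succ' k d
  omega

/-- Boundary value. -/
lemma macaulay_choose {d k : ℕ} (hk : d + 1 ≤ k) :
    macaulay (d+1) (Nat.choose k (d+1)) = Nat.choose (k+1) (d+2) := by
  have := macaulay_rep (r := 0) hk (Nat.choose_pos (by omega))
  simpa [macaulay_zero] using this

lemma macaulay_one {d : ℕ} : macaulay (d+1) 1 = 1 := by
  have h := macaulay_choose (k := d+1) (d := d) le_rfl
  simpa [Nat.choose_self] using h

/-- `macaulay 1 a = C(a+1,2)`. -/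
lemma macaulay_one_left (a : ℕ) : macaulay 1 a = Nat.choose (a+1) 2 := by
  cases a with
  | zero => rw [macaulay_zero]; rfl
  | succ n =>
    have h := macaulay_rep (d := 0) (k := n+1) (r := 0) (by omega) (by simp [Nat.choose_zero_right])
    show macaulay 1 (n+1) = Nat.choose (n+2) 2
    have h2 : macaulay 1 (n+1) = Nat.choose (n+2) 2 + macaulay 0 0 := by
      simpa using h
    rw [macaulay_zero] at h2
    omega

/-- strict monotonicity step -/
lemma macaulay_succ_ge {d : ℕ} : ∀ a : ℕ, macaulay (d+1) a + 1 ≤ macaulay (d+1) (a+1) := by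
  induction d with
  | zero =>
    intro a
    rw [macaulay_one_left, macaulay_one_left]
    have h : Nat.choose (a+1+1) 2 = Nat.choose (a+1) 1 + Nat.choose (a+1) 2 :=
      Nat.choose_succ_succ' (a+1) 1
    rw [Nat.choose_one_right] at h
    omega
  | succ e ih =>
    intro a
    show macaulay (e+2) a + 1 ≤ macaulay (e+2) (a+1)
    obtain ⟨k, r, hk, hrep0, hr0⟩ := macaulay_exists_rep (d := e+1) (a := a+1) (by omega)
    have hrep : a + 1 = Nat.choose k (e+2) + r := hrep0
    have hr : r < Nat.choose k (e+1) := hr0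
    clear hrep0 hr0
    rcases Nat.eq_zero_or_pos r with hr0 | hrpos
    · subst hr0
      rcases Nat.lt_or_ge (e+2) k with hlt | hge
      · obtain ⟨m, rfl⟩ : ∃ m, k = m + 1 := ⟨k - 1, by omega⟩
        have hm : e + 2 ≤ m := by omega
        have hpas : Nat.choose (m+1) (e+2) = Nat.choose m (e+1) + Nat.choose m (e+2) :=
          Nat.choose_succ_succ' m (e+1)
        have hCpos : 0 < Nat.choose m (e+1) := Nat.choose_pos (by omega)
        have ha : a = Nat.choose m (e+2) + (Nat.choose m (e+1) - 1) := by omega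
        have hfa : macaulay (e+2) a
            = Nat.choose (m+1) (e+3) + macaulay (e+1) (Nat.choose m (e+1) - 1) := by
          rw [ha]; exact macaulay_rep hm (by omega)
        have hfa1 : macaulay (e+2) (a+1) = Nat.choose (m+2) (e+3) := by
          rw [hrep]
          have := macaulay_choose (d := e+1) (k := m+1) (by omega)
          simpa using this
        have hstep := ih (Nat.choose m (e+1) - 1)
        have hb : Nat.choose m (e+1) - 1 + 1 = Nat.choose m (e+1) := by omega
        rw [hb] at hstep
        have hbd : macaulay (e+1) (Nat.choose m (e+1)) = Nat.choose (m+1) (e+2) :=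
          macaulay_choose (by omega)
        have hpas2 : Nat.choose (m+2) (e+3) = Nat.choose (m+1) (e+2) + Nat.choose (m+1) (e+3) :=
          Nat.choose_succ_succ' (m+1) (e+2)
        omega
      · have hk2 : k = e + 2 := by omega
        have hCk : Nat.choose k (e+2) = 1 := by rw [hk2]; exact Nat.choose_self _
        have ha0 : a = 0 := by omega
        subst ha0
        show macaulay (e+2) 0 + 1 ≤ macaulay (e+2) 1
        have h1 : macaulay (e+2) 1 = 1 := macaulay_one
        rw [macaulay_zero, h1]
    · obtain ⟨r', rfl⟩ : ∃ r', r = r' + 1 := ⟨r - 1, by omega⟩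
      have ha : a = Nat.choose k (e+2) + r' := by omega
      have hfa : macaulay (e+2) a = Nat.choose (k+1) (e+3) + macaulay (e+1) r' := by
        rw [ha]; exact macaulay_rep hk (by omega)
      have hfa1 : macaulay (e+2) (a+1) = Nat.choose (k+1) (e+3) + macaulay (e+1) (r'+1) := by
        rw [hrep]; exact macaulay_rep hk hr
      have := ih r'
      omega

lemma macaulay_mono {d : ℕ} : Monotone (macaulay d) := by
  cases d with
  | zero => intro a b _; simp [macaulay_zero_left]
  | succ e =>
    apply monotone_nat_of_le_succ
    intro a
    have := macaulay_succ_ge (d := e) a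
    omega

/-- Superadditivity statement at level `d`. -/
def SA (d : ℕ) : Prop := ∀ a b : ℕ, macaulay d a + macaulay d b ≤ macaulay d (a + b)

/-- Carry lemma at level `d`. -/
def EE (d : ℕ) : Prop := ∀ k x y z : ℕ, d ≤ k → x ≤ Nat.choose k d → y ≤ Nat.choose k d →
  x + y = Nat.choose k d + z →
  macaulay d x + macaulay d y ≤ macaulay d z + Nat.choose (k+1) (d+1)

/-- Monotonicity of the "drop below a binomial" cost, at level `d`. -/
def HH (d : ℕ) : Prop := ∀ m n t u v : ℕ, d ≤ m → m ≤ n → u + t = Nat.choose m d →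
  v + t = Nat.choose n d →
  macaulay d (Nat.choose m d) + macaulay d v ≤ macaulay d u + macaulay d (Nat.choose n d)

lemma two_choose_two : ∀ n : ℕ, 2 * Nat.choose (n+1) 2 = n * (n+1) := by
  intro n
  induction n with
  | zero => rfl
  | succ n ih =>
    have h : Nat.choose (n+1+1) 2 = Nat.choose (n+1) 1 + Nat.choose (n+1) 2 :=
      Nat.choose_succ_succ' (n+1) 1
    rw [Nat.choose_one_right] at h
    nlinarith [ih, h]

lemma SA1 : SA 1 := by
  intro a b
  rw [macaulay_one_left, macaulay_one_left, macaulay_one_left]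
  nlinarith [two_choose_two a, two_choose_two b, two_choose_two (a+b), Nat.zero_le (a*b)]

lemma EE1 : EE 1 := by
  intro k x y z hk hx hy hxy
  rw [Nat.choose_one_right] at hx hy hxy
  rw [macaulay_one_left, macaulay_one_left, macaulay_one_left]
  have e1 := two_choose_two x
  have e2 := two_choose_two y
  have e3 := two_choose_two z
  have e4 := two_choose_two k
  nlinarith [e1, e2, e3, e4, Nat.mul_le_mul hx hy, hxy, Nat.zero_le ((k-x)*(k-y))]

lemma HH1 : HH 1 := by
  intro m n t u v hm hmn hu hv
  rw [Nat.choose_one_right] at hu hv ⊢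
  rw [Nat.choose_one_right]
  rw [macaulay_one_left, macaulay_one_left, macaulay_one_left, macaulay_one_left]
  have e1 := two_choose_two m
  have e2 := two_choose_two v
  have e3 := two_choose_two u
  have e4 := two_choose_two n
  nlinarith [e1, e2, e3, e4]

/-- Cross-level drop-cost comparison: dropping `t` below `C(m,e+2)` at level `e+2`
costs at most dropping `t` below `C(n,e+1)` at level `e+1`, for `m ≤ n`. -/
lemma H1lem (e : ℕ) (sa : SA (e+1)) (hh : HH (e+1)) :
    ∀ m n t u v : ℕ, e + 2 ≤ m → m ≤ n → u + t = Nat.choose m (e+2) →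
    v + t = Nat.choose n (e+1) →
    Nat.choose (m+1) (e+3) + macaulay (e+1) v ≤ macaulay (e+2) u + Nat.choose (n+1) (e+2) := by
  intro m
  induction m using Nat.strong_induction_on with
  | _ m IH =>
  intro n t u v hm hmn hu hv
  have hn1 : e + 1 ≤ n := by omega
  have L2n : macaulay (e+1) (Nat.choose n (e+1)) = Nat.choose (n+1) (e+2) :=
    macaulay_choose hn1
  rcases Nat.eq_zero_or_pos t with rfl | ht
  · -- t = 0 : u = C(m,e+2), v = C(n,e+1)
    have hu' : u = Nat.choose m (e+2) := by omega
    have hv' : v = Nat.choose n (e+1) := by omega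
    subst hu' hv'
    have L2m : macaulay (e+2) (Nat.choose m (e+2)) = Nat.choose (m+1) (e+3) :=
      macaulay_choose hm
    omega
  rcases Nat.lt_or_ge (e+2) m with hm3 | hm2
  · -- m ≥ e+3
    obtain ⟨m', rfl⟩ : ∃ m', m = m' + 1 := ⟨m - 1, by omega⟩
    have hm' : e + 2 ≤ m' := by omega
    have hpas : Nat.choose (m'+1) (e+2) = Nat.choose m' (e+1) + Nat.choose m' (e+2) :=
      Nat.choose_succ_succ' m' (e+1)
    have hpas3 : Nat.choose (m'+1+1) (e+3) = Nat.choose (m'+1) (e+2) + Nat.choose (m'+1) (e+3) :=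
      Nat.choose_succ_succ' (m'+1) (e+2)
    rcases le_or_gt t (Nat.choose m' (e+1)) with hcase | hcase
    · -- t ≤ C(m',e+1)
      set w := Nat.choose m' (e+1) - t with hw
      have hwt : w + t = Nat.choose m' (e+1) := by omega
      have huw : u = Nat.choose m' (e+2) + w := by omega
      have hfu : macaulay (e+2) u = Nat.choose (m'+1) (e+3) + macaulay (e+1) w := by
        rw [huw]; exact macaulay_rep hm' (by omega)
      -- HH at level e+1 with (m', n)
      have hHH := hh m' n t w v (by omega) (by omega) hwt hv
      have L2m' : macaulay (e+1) (Nat.choose m' (e+1)) = Nat.choose (m'+1) (e+2) :=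
        macaulay_choose (by omega)
      rw [L2m', L2n] at hHH
      omega
    · -- t > C(m',e+1)
      set t1 := t - Nat.choose m' (e+1) with ht1
      have hut1 : u + t1 = Nat.choose m' (e+2) := by omega
      set v1 := v + Nat.choose m' (e+1) with hv1
      have hvt1 : v1 + t1 = Nat.choose n (e+1) := by omega
      have hIH := IH m' (by omega) n t1 u v1 hm' (by omega) hut1 hvt1
      have hsa := sa v (Nat.choose m' (e+1))
      rw [← hv1] at hsa
      have L2m' : macaulay (e+1) (Nat.choose m' (e+1)) = Nat.choose (m'+1) (e+2) :=
        macaulay_choose (by omega)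
      rw [L2m'] at hsa
      omega
  · -- m = e+2 : C(m,e+2) = 1, t = 1, u = 0
    have hm2' : m = e + 2 := by omega
    subst hm2'
    have hC1 : Nat.choose (e+2) (e+2) = 1 := Nat.choose_self _
    have hu0 : u = 0 ∧ t = 1 := by omega
    obtain ⟨rfl, rfl⟩ := hu0
    rw [macaulay_zero]
    have hstep := macaulay_succ_ge (d := e) v
    have hv1 : macaulay (e+1) (v+1) = Nat.choose (n+1) (e+2) := by
      rw [show v + 1 = Nat.choose n (e+1) from hv]; exact L2n
    have hCm1 : Nat.choose (e+3) (e+3) = 1 := Nat.choose_self _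
    have : Nat.choose (e+2+1) (e+3) = 1 := hCm1
    omega

/-- The shift lemma: moving a block of `t` down to `a` from just below the boundary
`C(k+1,e+2)`. -/
lemma Dlem (e : ℕ) (sa : SA (e+1)) (ee : EE (e+1)) (hh : HH (e+1)) :
    ∀ k t s a : ℕ, e + 2 ≤ k → s + t = Nat.choose k (e+1) → a + t ≤ Nat.choose (k+1) (e+2) →
    macaulay (e+2) (a+t) + macaulay (e+1) s ≤ macaulay (e+2) a + Nat.choose (k+1) (e+2) := by
  intro k t s a hk hst hat
  have hpasK : Nat.choose (k+1) (e+2) = Nat.choose k (e+1) + Nat.choose k (e+2) :=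
    Nat.choose_succ_succ' k (e+1)
  rcases Nat.eq_zero_or_pos t with rfl | ht
  · -- t = 0, s = C(k,e+1)
    have hs : s = Nat.choose k (e+1) := by omega
    have L2s : macaulay (e+1) s = Nat.choose (k+1) (e+2) := by
      rw [hs]; exact macaulay_choose (by omega)
    simp only [Nat.add_zero]
    omega
  rcases Nat.lt_or_ge (a+t) (Nat.choose (k+1) (e+2)) with hlt | hge
  · -- a + t < C(k+1,e+2)
    obtain ⟨k', r, hk', hrep0, hr⟩ := macaulay_exists_rep (d := e+1) (a := a+t) (by omega)
    have hrep : a + t = Nat.choose k' (e+2) + r := hrep0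
    clear hrep0
    have hk'k : k' ≤ k := by
      by_contra hcon
      have : Nat.choose (k+1) (e+2) ≤ Nat.choose k' (e+2) :=
        Nat.choose_le_choose _ (by omega)
      omega
    have hfat : macaulay (e+2) (a+t) = Nat.choose (k'+1) (e+3) + macaulay (e+1) r := by
      rw [hrep]; exact macaulay_rep hk' hr
    rcases le_or_gt t r with hcase | hcase
    · -- subcase (i) : t ≤ r
      set r2 := r - t with hr2
      have ha : a = Nat.choose k' (e+2) + r2 := by omega
      have hfa : macaulay (e+2) a = Nat.choose (k'+1) (e+3) + macaulay (e+1) r2 := by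
        rw [ha]; exact macaulay_rep hk' (by omega)
      have hrk : r ≤ Nat.choose k (e+1) := by
        have : Nat.choose k' (e+1) ≤ Nat.choose k (e+1) := Nat.choose_le_choose _ hk'k
        omega
      have hee : macaulay (e+1) r + macaulay (e+1) s
          ≤ macaulay (e+1) r2 + Nat.choose (k+1) (e+2) :=
        ee k r s r2 (by omega) hrk (by omega) (by omega)
      omega
    · -- subcase (ii) : t > r
      set t' := t - r with ht'
      have hat' : a + t' = Nat.choose k' (e+2) := by omega
      set rs := r + s with hrs
      have hrst : rs + t' = Nat.choose k (e+1) := by omega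
      have hsa := sa r s
      rw [← hrs] at hsa
      have hH1 := H1lem e sa hh k' k t' a rs hk' hk'k hat' hrst
      omega
  · -- a + t = C(k+1,e+2)
    have heq : a + t = Nat.choose (k+1) (e+2) := by omega
    have hfat : macaulay (e+2) (a+t) = Nat.choose (k+2) (e+3) := by
      rw [heq]; exact macaulay_choose (by omega)
    have ha : a = Nat.choose k (e+2) + s := by omega
    have hfa : macaulay (e+2) a = Nat.choose (k+1) (e+3) + macaulay (e+1) s := by
      rw [ha]; exact macaulay_rep (by omega) (by omega)
    have hpas3 : Nat.choose (k+2) (e+3) = Nat.choose (k+1) (e+2) + Nat.choose (k+1) (e+3) :=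
      Nat.choose_succ_succ' (k+1) (e+2)
    omega

lemma Elem (e : ℕ) (sa : SA (e+1)) (ee : EE (e+1)) (hh : HH (e+1)) : EE (e+2) := by
  have main : ∀ k x y z : ℕ, e + 2 ≤ k → x ≤ y → x ≤ Nat.choose k (e+2) →
      y ≤ Nat.choose k (e+2) → x + y = Nat.choose k (e+2) + z →
      macaulay (e+2) x + macaulay (e+2) y ≤ macaulay (e+2) z + Nat.choose (k+1) (e+3) := by
    intro k
    induction k using Nat.strong_induction_on with
    | _ k IH =>
    intro x y z hk hxy hx hy hsum
    rcases eq_or_lt_of_le hy with hyC | hyC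
    · -- y = C(k, e+2)
      have hxz : x = z := by omega
      subst hxz
      have L2k : macaulay (e+2) (Nat.choose k (e+2)) = Nat.choose (k+1) (e+3) :=
        macaulay_choose hk
      rw [hyC, L2k]
    · -- y < C(k, e+2)
      have hCpos : 0 < Nat.choose k (e+2) := Nat.choose_pos (by omega)
      have hypos : 0 < y := by omega
      obtain ⟨m, r, hm, hrep0, hr⟩ := macaulay_exists_rep (d := e+1) (a := y) hypos
      have hrep : y = Nat.choose m (e+2) + r := hrep0
      clear hrep0
      have hmk : m < k := by
        by_contra hcon
        have : Nat.choose k (e+2) ≤ Nat.choose m (e+2) := Nat.choose_le_choose _ (by omega)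
        omega
      have hfy : macaulay (e+2) y = Nat.choose (m+1) (e+3) + macaulay (e+1) r := by
        rw [hrep]; exact macaulay_rep hm hr
      rcases Nat.lt_or_ge (m+1) k with hmk2 | hmk2
      · -- m + 1 < k : recurse at k-1
        obtain ⟨κ, rfl⟩ : ∃ κ, k = κ + 1 := ⟨k - 1, by omega⟩
        have hκ : e + 2 ≤ κ := by omega
        have hpasκ : Nat.choose (κ+1) (e+2) = Nat.choose κ (e+1) + Nat.choose κ (e+2) :=
          Nat.choose_succ_succ' κ (e+1)
        have hyκ : y < Nat.choose κ (e+2) := by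
          calc y < Nat.choose (m+1) (e+2) := by
                have hp : Nat.choose (m+1) (e+2) = Nat.choose m (e+1) + Nat.choose m (e+2) :=
                  Nat.choose_succ_succ' m (e+1)
                omega
            _ ≤ Nat.choose κ (e+2) := Nat.choose_le_choose _ (by omega)
        set w := z + Nat.choose κ (e+1) with hw
        have hsw : x + y = Nat.choose κ (e+2) + w := by omega
        have hIH := IH κ (by omega) x y w hκ hxy (by omega) (by omega) hsw
        have hD : macaulay (e+2) (z + Nat.choose κ (e+1)) + macaulay (e+1) 0
            ≤ macaulay (e+2) z + Nat.choose (κ+1) (e+2) := by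
          refine Dlem e sa ee hh κ (Nat.choose κ (e+1)) 0 z hκ (by omega) ?_
          omega
        rw [macaulay_zero, ← hw] at hD
        have hpas3 : Nat.choose (κ+1+1) (e+3) = Nat.choose (κ+1) (e+2) + Nat.choose (κ+1) (e+3) :=
          Nat.choose_succ_succ' (κ+1) (e+2)
        omega
      · -- k = m + 1
        have hkm : k = m + 1 := by omega
        subst hkm
        have hpasm : Nat.choose (m+1) (e+2) = Nat.choose m (e+1) + Nat.choose m (e+2) :=
          Nat.choose_succ_succ' m (e+1)
        set t := Nat.choose m (e+1) - r with htdef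
        have htr : r + t = Nat.choose m (e+1) := by omega
        have hzx : z + t = x := by omega
        have hD := Dlem e sa ee hh m t r z hm (by omega) (by omega)
        rw [hzx] at hD
        have hpas3 : Nat.choose (m+1+1) (e+3) = Nat.choose (m+1) (e+2) + Nat.choose (m+1) (e+3) :=
          Nat.choose_succ_succ' (m+1) (e+2)
        omega
  intro k x y z hk hx hy hsum
  rcases le_total x y with h | h
  · exact main k x y z hk h hx hy hsum
  · have h2 : macaulay (e+2) y + macaulay (e+2) x
        ≤ macaulay (e+2) z + Nat.choose (k+1) (e+3) := main k y x z hk h hy hx (by omega)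
    have h3 : Nat.choose (k+1) (e+2+1) = Nat.choose (k+1) (e+3) := rfl
    omega

lemma H2lem (e : ℕ) (sa : SA (e+1)) (ee : EE (e+1)) (hh : HH (e+1)) : HH (e+2) := by
  intro m n t u v hm hmn hu hv
  revert t u v
  induction n, hmn using Nat.le_induction with
  | base =>
    intro t u v hu hv
    have huv : u = v := by omega
    subst huv
    omega
  | succ n hn IH =>
    intro t u v hu hv
    have hn2 : e + 2 ≤ n := by omega
    have hpasn : Nat.choose (n+1) (e+2) = Nat.choose n (e+1) + Nat.choose n (e+2) :=
      Nat.choose_succ_succ' n (e+1)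
    have L2n1 : macaulay (e+2) (Nat.choose (n+1) (e+2)) = Nat.choose (n+2) (e+3) :=
      macaulay_choose (by omega)
    have hpas3 : Nat.choose (n+2) (e+3) = Nat.choose (n+1) (e+2) + Nat.choose (n+1) (e+3) :=
      Nat.choose_succ_succ' (n+1) (e+2)
    have L2n : macaulay (e+2) (Nat.choose n (e+2)) = Nat.choose (n+1) (e+3) :=
      macaulay_choose hn2
    rcases Nat.eq_zero_or_pos t with rfl | ht
    · -- t = 0
      have hu' : u = Nat.choose m (e+2) := by omega
      have hv' : v = Nat.choose (n+1) (e+2) := by omega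
      subst hu' hv'
      omega
    rcases le_or_gt t (Nat.choose n (e+1)) with hcase | hcase
    · -- t ≤ C(n, e+1) : unfold v
      set w := Nat.choose n (e+1) - t with hwdef
      have hwt : w + t = Nat.choose n (e+1) := by omega
      have hvw : v = Nat.choose n (e+2) + w := by omega
      have hfv : macaulay (e+2) v = Nat.choose (n+1) (e+3) + macaulay (e+1) w := by
        rw [hvw]; exact macaulay_rep hn2 (by omega)
      have hH1 := H1lem e sa hh m n t u w hm hn hu hwt
      have L2m : macaulay (e+2) (Nat.choose m (e+2)) = Nat.choose (m+1) (e+3) :=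
        macaulay_choose hm
      omega
    · -- t > C(n, e+1)
      set t2 := t - Nat.choose n (e+1) with ht2def
      have hvt2 : v + t2 = Nat.choose n (e+2) := by omega
      set u2 := u + Nat.choose n (e+1) with hu2def
      have hut2 : u2 + t2 = Nat.choose m (e+2) := by omega
      have hIH := IH t2 u2 v hut2 hvt2
      have hu2C : u2 ≤ Nat.choose (n+1) (e+2) := by
        have h1 : Nat.choose m (e+2) ≤ Nat.choose n (e+2) := Nat.choose_le_choose _ hn
        omega
      have hD : macaulay (e+2) (u + Nat.choose n (e+1)) + macaulay (e+1) 0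
          ≤ macaulay (e+2) u + Nat.choose (n+1) (e+2) :=
        Dlem e sa ee hh n (Nat.choose n (e+1)) 0 u hn2 (by omega) (by omega)
      rw [macaulay_zero, ← hu2def] at hD
      omega

lemma Nlem (e : ℕ) (sa : SA (e+1)) :
    ∀ k, e + 2 ≤ k → Nat.choose (k+1) (e+3) ≤ macaulay (e+1) (Nat.choose k (e+2)) := by
  intro k hk
  induction k, hk using Nat.le_induction with
  | base =>
    have h1 : Nat.choose (e+2) (e+2) = 1 := Nat.choose_self _
    have h2 : Nat.choose (e+3) (e+3) = 1 := Nat.choose_self _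
    have h3 : macaulay (e+1) 1 = 1 := macaulay_one
    have h4 : Nat.choose (e+2+1) (e+3) = 1 := h2
    rw [h1, h3]
    omega
  | succ k hk IH =>
    have hpas : Nat.choose (k+1) (e+2) = Nat.choose k (e+1) + Nat.choose k (e+2) :=
      Nat.choose_succ_succ' k (e+1)
    have hsa := sa (Nat.choose k (e+1)) (Nat.choose k (e+2))
    rw [← hpas] at hsa
    have L2 : macaulay (e+1) (Nat.choose k (e+1)) = Nat.choose (k+1) (e+2) :=
      macaulay_choose (by omega)
    have hpas3 : Nat.choose (k+1+1) (e+3) = Nat.choose (k+1) (e+2) + Nat.choose (k+1) (e+3) :=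
      Nat.choose_succ_succ' (k+1) (e+2)
    omega

lemma Mlem (e : ℕ) (sa : SA (e+1)) : ∀ a, macaulay (e+2) a ≤ macaulay (e+1) a := by
  intro a
  rcases Nat.eq_zero_or_pos a with rfl | ha
  · rw [macaulay_zero, macaulay_zero]
  obtain ⟨k, r, hk, hrep0, hr⟩ := macaulay_exists_rep (d := e+1) (a := a) ha
  have hrep : a = Nat.choose k (e+2) + r := hrep0
  clear hrep0
  have hfa : macaulay (e+2) a = Nat.choose (k+1) (e+3) + macaulay (e+1) r := by
    rw [hrep]; exact macaulay_rep hk hr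
  have hN := Nlem e sa k hk
  have hsa := sa (Nat.choose k (e+2)) r
  rw [← hrep] at hsa
  omega

lemma SAlem (e : ℕ) (sa : SA (e+1)) (ee : EE (e+1)) (hh : HH (e+1)) : SA (e+2) := by
  have hE := Elem e sa ee hh
  have main : ∀ a b : ℕ, a ≤ b →
      macaulay (e+2) a + macaulay (e+2) b ≤ macaulay (e+2) (a+b) := by
    intro a
    induction a using Nat.strong_induction_on with
    | _ a IH =>
    intro b hab
    rcases Nat.eq_zero_or_pos a with rfl | ha
    · rw [macaulay_zero]; simp
    have hb : 0 < b := by omega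
    obtain ⟨k, s, hk, hrep0, hs⟩ := macaulay_exists_rep (d := e+1) (a := b) hb
    have hrep : b = Nat.choose k (e+2) + s := hrep0
    clear hrep0
    have hfb : macaulay (e+2) b = Nat.choose (k+1) (e+3) + macaulay (e+1) s := by
      rw [hrep]; exact macaulay_rep hk hs
    have hpasK : Nat.choose (k+1) (e+2) = Nat.choose k (e+1) + Nat.choose k (e+2) :=
      Nat.choose_succ_succ' k (e+1)
    rcases Nat.lt_or_ge (a + s) (Nat.choose k (e+1)) with hA | hB
    · -- Case A : same top binomial
      have hab2 : a + b = Nat.choose k (e+2) + (s + a) := by omega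
      have hfab : macaulay (e+2) (a+b) = Nat.choose (k+1) (e+3) + macaulay (e+1) (s+a) := by
        rw [hab2]; exact macaulay_rep hk (by omega)
      have hM := Mlem e sa a
      have hsa := sa s a
      omega
    · -- Case B : carry over the boundary C(k+1, e+2)
      set c := a + s - Nat.choose k (e+1) with hcdef
      have hcb : c + Nat.choose (k+1) (e+2) = a + b := by omega
      have hbC : b < Nat.choose (k+1) (e+2) := by omega
      have haC : a ≤ Nat.choose (k+1) (e+2) := by omega
      have hEk := hE (k+1) a b c (by omega) haC (by omega) (by omega)
      have hca : c < a := by omega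
      have hIH := IH c hca (Nat.choose (k+1) (e+2)) (by omega)
      rw [hcb] at hIH
      have L2 : macaulay (e+2) (Nat.choose (k+1) (e+2)) = Nat.choose (k+2) (e+3) :=
        macaulay_choose (by omega)
      have hch : Nat.choose (k+1+1) (e+2+1) = Nat.choose (k+2) (e+3) := rfl
      omega
  intro a b
  rcases le_total a b with h | h
  · exact main a b h
  · have h2 := main b a h
    rw [Nat.add_comm b a] at h2
    omega

lemma all_levels : ∀ e : ℕ, SA (e+1) ∧ EE (e+1) ∧ HH (e+1) := by
  intro e
  induction e with
  | zero => exact ⟨SA1, EE1, HH1⟩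
  | succ e ih =>
    obtain ⟨sa, ee, hh⟩ := ih
    exact ⟨SAlem e sa ee hh, Elem e sa ee hh, H2lem e sa ee hh⟩

/-- Macaulay's function is superadditive: for any nonnegative integers `a` and `b` and
any positive integer `d`, `a^{⟨d⟩} + b^{⟨d⟩} ≤ (a + b)^{⟨d⟩}`. -/
theorem macaulay_superadditive (a b d : ℕ) (hd : 0 < d) :
    macaulay d a + macaulay d b ≤ macaulay d (a + b) := by
  obtain ⟨e, rfl⟩ : ∃ e, d = e + 1 := ⟨d - 1, by omega⟩
  exact (all_levels e).1 a b
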